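/- Let (X, d) be a proper geodesic metric space equipped with a doubling measure μ, and assume that for μ-almost every x ∈ X any two tangents of X at x are pointed isometric. Then for μ-almost every x ∈ X, every proper tangent (Y, y) of X at x satisfies: every proper tangent of Y at y is pointed isometric to (Y, y) itself. -/

import Mathlib

open Metric Filter MeasureTheory

universe u v w

/-- `BallsGHClose l x y R ε` asserts that the Gromov–Hausdorff distance between the closed
ball of radius `R` centered at `x` in the rescaled space `(X, l·d)` (which, as a set, is the
closed ball of radius `R / l` around `x` in `X`, carrying the distance `l · d`) and the closed
ball of radius `R` centered at `y` in `Y` is less than `ε`: following the definition of the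
Gromov–Hausdorff distance, there are isometric copies of the two balls inside a common metric
space `Z` whose Hausdorff distance in `Z` is `< ε`. -/
def BallsGHClose {X : Type u} {Y : Type v} [MetricSpace X] [MetricSpace Y]
    (l : ℝ) (x : X) (y : Y) (R ε : ℝ) : Prop :=
  ∃ (Z : Type (max u v)) (_ : MetricSpace Z) (f : X → Z) (g : Y → Z),
    (∀ a ∈ closedBall x (R / l), ∀ b ∈ closedBall x (R / l),
      dist (f a) (f b) = l * dist a b) ∧
    (∀ a ∈ closedBall y R, ∀ b ∈ closedBall y R, dist (g a) (g b) = dist a b) ∧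
    hausdorffDist (f '' closedBall x (R / l)) (g '' closedBall y R) < ε

/-- `(Y, y)` is a tangent (blow-up) of `X` at `x`: there is a sequence `λ_j → ∞` of positive
reals such that, for every `R > 0`, the Gromov–Hausdorff distance between the closed ball of
radius `R` centered at `x` in `(X, λ_j · d)` and the closed ball of radius `R` centered at `y`
in `Y` tends to `0` as `j → ∞`. -/
def IsTangentAt {X : Type u} [MetricSpace X] (x : X)
    (Y : Type v) [MetricSpace Y] (y : Y) : Prop :=
  ∃ lam : ℕ → ℝ, (∀ j, 0 < lam j) ∧ Tendsto lam atTop atTop ∧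
    ∀ R > (0 : ℝ), ∀ ε > (0 : ℝ), ∀ᶠ j in atTop, BallsGHClose (lam j) x y R ε

/-- Two pointed metric spaces `(Y, y)` and `(Y', y')` are pointed isometric if there is a
surjective isometry `f : Y → Y'` with `f y = y'`. -/
def PointedIsometric {Y : Type v} {Y' : Type w} [MetricSpace Y] [MetricSpace Y']
    (y : Y) (y' : Y') : Prop :=
  ∃ f : Y → Y', Isometry f ∧ Function.Surjective f ∧ f y = y'

/-- A doubling measure: a nonzero Radon measure (on a proper metric space, Radon means Borel
and finite on compact sets) such that `μ(B(x, 2r)) ≤ C · μ(B(x, r))` for some constant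
`C > 0`, every center `x` and every radius `r > 0`. -/
def IsDoublingMeasure {X : Type u} [MetricSpace X] [MeasurableSpace X]
    (μ : Measure X) : Prop :=
  μ ≠ 0 ∧ (∀ K : Set X, IsCompact K → μ K ≠ ⊤) ∧
    ∃ C : NNReal, 0 < C ∧ ∀ (x : X) (r : ℝ), 0 < r →
      μ (closedBall x (2 * r)) ≤ (C : ENNReal) * μ (closedBall x r)

/-- A metric space is geodesic if any two points `x, y` are joined by an isometric embedding
of the real interval `[0, dist x y]`. -/
def IsGeodesicSpace (X : Type u) [MetricSpace X] : Prop :=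
  ∀ x y : X, ∃ γ : ℝ → X, γ 0 = x ∧ γ (dist x y) = y ∧
    ∀ s ∈ Set.Icc 0 (dist x y), ∀ t ∈ Set.Icc 0 (dist x y), dist (γ s) (γ t) = |s - t|

namespace TangentAux
open Set Function Bornology TopologicalSpace
open scoped ENNReal
universe a b c t₁ t₂

def AuxClose.{s₁, s₂, s₃} {X : Type s₂} {Y : Type s₃} [MetricSpace X] [MetricSpace Y]
    (l : ℝ) (x : X) (y : Y) (R ε : ℝ) : Prop :=
  ∃ (Z : Type s₁) (_ : MetricSpace Z) (f : X → Z) (g : Y → Z),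
    (∀ a ∈ closedBall x (R / l), ∀ b ∈ closedBall x (R / l),
      dist (f a) (f b) = l * dist a b) ∧
    (∀ a ∈ closedBall y R, ∀ b ∈ closedBall y R, dist (g a) (g b) = dist a b) ∧
    hausdorffDist (f '' closedBall x (R / l)) (g '' closedBall y R) < ε

theorem ballsGHClose_iff_aux {X : Type u} {Y : Type v} [MetricSpace X] [MetricSpace Y]
    {l : ℝ} {x : X} {y : Y} {R ε : ℝ} :
    BallsGHClose l x y R ε ↔ AuxClose.{max u v} l x y R ε := Iff.rfl

theorem isBounded_image_ball {A : Type a} {W : Type b} [MetricSpace A] [MetricSpace W]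
    {f : A → W} {c : A} {r l : ℝ}
    (hf : ∀ a ∈ closedBall c r, ∀ b ∈ closedBall c r, dist (f a) (f b) = l * dist a b) :
    IsBounded (f '' closedBall c r) := by
  rw [Metric.isBounded_iff]
  refine ⟨|l| * (r + r), ?_⟩
  rintro _ ⟨p, hp, rfl⟩ _ ⟨q, hq, rfl⟩
  rw [hf p hp q hq]
  have h1 : dist p q ≤ r + r := by
    have := mem_closedBall.1 hp
    have := mem_closedBall.1 hq
    have := dist_triangle p c q
    rw [dist_comm c q] at this
    linarith
  have h2 : (0:ℝ) ≤ dist p q := dist_nonneg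
  have h3 : l ≤ |l| := le_abs_self l
  have h4 : (0:ℝ) ≤ |l| := abs_nonneg l
  nlinarith

theorem isCompact_image_ball {A : Type a} {W : Type b} [MetricSpace A] [ProperSpace A]
    [MetricSpace W] {f : A → W} {c : A} {r l : ℝ} (hl : 0 ≤ l)
    (hf : ∀ a ∈ closedBall c r, ∀ b ∈ closedBall c r, dist (f a) (f b) = l * dist a b) :
    IsCompact (f '' closedBall c r) := by
  refine (isCompact_closedBall c r).image_of_continuousOn ?_
  have : LipschitzOnWith (Real.toNNReal l) f (closedBall c r) := by
    rw [lipschitzOnWith_iff_dist_le_mul]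
    intro p hp q hq
    rw [hf p hp q hq, Real.coe_toNNReal l hl]
  exact this.continuousOn

theorem isometry_up {A : Type a} [MetricSpace A] : Isometry (ULift.up.{b} : A → ULift A) :=
  Isometry.of_dist_eq fun _ _ => rfl

/-- change the universe of the witness space in `AuxClose`. -/
theorem AuxClose.adjust {X : Type a} {Y : Type b} [MetricSpace X] [ProperSpace X]
    [MetricSpace Y] [ProperSpace Y] {l R ε : ℝ} (hl : 0 < l) (hR : 0 < R) {x : X} {y : Y}
    (h : AuxClose.{t₁} l x y R ε) : AuxClose.{t₂} l x y R ε := by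
  classical
  obtain ⟨W, _, f, g, hf, hg, hH⟩ := h
  have hg1 : ∀ p ∈ closedBall y R, ∀ q ∈ closedBall y R,
      dist (g p) (g q) = (1:ℝ) * dist p q := by
    intro p hp q hq; rw [hg p hp q hq, one_mul]
  have hxmem : x ∈ closedBall x (R / l) := mem_closedBall_self (by positivity)
  set A₁ : Set W := f '' closedBall x (R / l) with hA₁def
  set A₂ : Set W := g '' closedBall y R with hA₂def
  have hc₁ : IsCompact A₁ := isCompact_image_ball hl.le hf
  have hc₂ : IsCompact A₂ := isCompact_image_ball zero_le_one hg1
  set s : Set W := A₁ ∪ A₂ with hsdef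
  have hsep : IsSeparable s := hc₁.isSeparable.union hc₂.isSeparable
  haveI : SeparableSpace (↥s) := hsep.separableSpace
  set κ : ↥s → lp (fun _ : ℕ => ℝ) ∞ := kuratowskiEmbedding ↥s with hκdef
  have hκ : Isometry κ := kuratowskiEmbedding.isometry ↥s
  set e : ↥s → ULift.{t₂} (lp (fun _ : ℕ => ℝ) ∞) := fun k => ULift.up (κ k) with hedef
  have he : Isometry e := isometry_up.comp hκ
  have hmemA₁ : ∀ p ∈ closedBall x (R / l), f p ∈ s := fun p hp =>
    Or.inl (mem_image_of_mem f hp)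
  have hmemA₂ : ∀ p ∈ closedBall y R, g p ∈ s := fun p hp =>
    Or.inr (mem_image_of_mem g hp)
  refine ⟨ULift.{t₂} (lp (fun _ : ℕ => ℝ) ∞), inferInstance,
    (fun p => if hp : p ∈ closedBall x (R / l) then e ⟨f p, hmemA₁ p hp⟩
      else e ⟨f x, hmemA₁ x hxmem⟩),
    (fun p => if hp : p ∈ closedBall y R then e ⟨g p, hmemA₂ p hp⟩
      else e ⟨g y, hmemA₂ y (mem_closedBall_self hR.le)⟩), ?_, ?_, ?_⟩
  · intro p hp q hq
    simp only [dif_pos hp, dif_pos hq]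
    rw [he.dist_eq, Subtype.dist_eq]
    exact hf p hp q hq
  · intro p hp q hq
    simp only [dif_pos hp, dif_pos hq]
    rw [he.dist_eq, Subtype.dist_eq]
    exact hg p hp q hq
  · have him1 : (fun p => if hp : p ∈ closedBall x (R / l) then e ⟨f p, hmemA₁ p hp⟩
        else e ⟨f x, hmemA₁ x hxmem⟩) '' closedBall x (R / l)
        = e '' (Subtype.val ⁻¹' A₁) := by
      apply Subset.antisymm
      · rintro _ ⟨p, hp, rfl⟩
        simp only [dif_pos hp]
        exact mem_image_of_mem e (by exact mem_image_of_mem f hp)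
      · rintro _ ⟨⟨q, hq⟩, hmem, rfl⟩
        obtain ⟨p, hp, hfp⟩ := hmem
        refine ⟨p, hp, ?_⟩
        simp only [dif_pos hp]
        congr 1
        exact Subtype.ext hfp
    have him2 : (fun p => if hp : p ∈ closedBall y R then e ⟨g p, hmemA₂ p hp⟩
        else e ⟨g y, hmemA₂ y (mem_closedBall_self hR.le)⟩) '' closedBall y R
        = e '' (Subtype.val ⁻¹' A₂) := by
      apply Subset.antisymm
      · rintro _ ⟨p, hp, rfl⟩
        simp only [dif_pos hp]
        exact mem_image_of_mem e (by exact mem_image_of_mem g hp)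
      · rintro _ ⟨⟨q, hq⟩, hmem, rfl⟩
        obtain ⟨p, hp, hgp⟩ := hmem
        refine ⟨p, hp, ?_⟩
        simp only [dif_pos hp]
        congr 1
        exact Subtype.ext hgp
    rw [him1, him2, Metric.hausdorffDist_image he,
      ← Metric.hausdorffDist_image (isometry_subtype_coe (s := s)),
      Subtype.image_preimage_coe, Subtype.image_preimage_coe,
      inter_eq_right.2 subset_union_left, inter_eq_right.2 subset_union_right]
    exact hH



theorem AuxClose.comp {X : Type a} {Y : Type b} {Z : Type c}
    [MetricSpace X] [MetricSpace Y] [MetricSpace Z]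
    {l R ε₁ ε₂ : ℝ} (hl : 0 < l) (hR : 0 < R) {x : X} {y : Y} {z : Z}
    (h1 : AuxClose.{t₁} l x y R ε₁) (h2 : AuxClose.{t₂} 1 y z R ε₂) :
    AuxClose.{max t₁ t₂} l x z R (ε₁ + ε₂) := by
  obtain ⟨W₁, _, f₁, g₁, hf₁, hg₁, hH₁⟩ := h1
  obtain ⟨W₂, _, f₂, g₂, hf₂, hg₂, hH₂⟩ := h2
  simp only [div_one, one_mul] at hf₂ hH₂
  have hxmem : x ∈ closedBall x (R / l) := mem_closedBall_self (by positivity)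
  have hymem : y ∈ closedBall y R := mem_closedBall_self hR.le
  have hzmem : z ∈ closedBall z R := mem_closedBall_self hR.le
  haveI : Nonempty (↥(closedBall y R)) := ⟨⟨y, hymem⟩⟩
  set Φ : ↥(closedBall y R) → W₁ := fun p => g₁ p.1 with hΦdef
  set Ψ : ↥(closedBall y R) → W₂ := fun p => f₂ p.1 with hΨdef
  set d₁ := hausdorffDist (f₁ '' closedBall x (R / l)) (g₁ '' closedBall y R) with hd₁def
  set d₂ := hausdorffDist (f₂ '' closedBall y R) (g₂ '' closedBall z R) with hd₂def
  have hd₁0 : 0 ≤ d₁ := hausdorffDist_nonneg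
  have hd₂0 : 0 ≤ d₂ := hausdorffDist_nonneg
  set δ : ℝ := (ε₁ + ε₂ - d₁ - d₂) / 2 with hδdef
  have hδ : 0 < δ := by rw [hδdef]; linarith
  have HΦΨ : ∀ p q : ↥(closedBall y R),
      |dist (Φ p) (Φ q) - dist (Ψ p) (Ψ q)| ≤ 2 * δ := by
    intro p q
    have e1 : dist (Φ p) (Φ q) = dist p.1 q.1 := hg₁ p.1 p.2 q.1 q.2
    have e2 : dist (Ψ p) (Ψ q) = dist p.1 q.1 := hf₂ p.1 p.2 q.1 q.2
    rw [e1, e2, sub_self, abs_zero]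
    positivity
  letI : MetricSpace (W₁ ⊕ W₂) := glueMetricApprox Φ Ψ δ hδ HΦΨ
  have hinl : Isometry (Sum.inl : W₁ → W₁ ⊕ W₂) := Isometry.of_dist_eq fun p q => rfl
  have hinr : Isometry (Sum.inr : W₂ → W₁ ⊕ W₂) := Isometry.of_dist_eq fun p q => rfl
  refine ⟨W₁ ⊕ W₂, inferInstance, fun p => Sum.inl (f₁ p), fun p => Sum.inr (g₂ p),
    ?_, ?_, ?_⟩
  · intro p hp q hq
    rw [hinl.dist_eq]
    exact hf₁ p hp q hq
  · intro p hp q hq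
    rw [hinr.dist_eq]
    exact hg₂ p hp q hq
  · have himl : (fun p => Sum.inl (f₁ p) : X → W₁ ⊕ W₂) '' closedBall x (R / l)
        = Sum.inl '' (f₁ '' closedBall x (R / l)) := by
      rw [← Set.image_comp]; rfl
    have himr : (fun p => Sum.inr (g₂ p) : Z → W₁ ⊕ W₂) '' closedBall z R
        = Sum.inr '' (g₂ '' closedBall z R) := by
      rw [← Set.image_comp]; rfl
    rw [himl, himr]
    set S₁ : Set (W₁ ⊕ W₂) := Sum.inl '' (f₁ '' closedBall x (R / l)) with hS₁def
    set M₁ : Set (W₁ ⊕ W₂) := Sum.inl '' (g₁ '' closedBall y R) with hM₁def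
    set M₂ : Set (W₁ ⊕ W₂) := Sum.inr '' (f₂ '' closedBall y R) with hM₂def
    set S₂ : Set (W₁ ⊕ W₂) := Sum.inr '' (g₂ '' closedBall z R) with hS₂def
    -- nonemptiness and boundedness
    have hS₁n : S₁.Nonempty := ⟨_, mem_image_of_mem _ (mem_image_of_mem f₁ hxmem)⟩
    have hM₁n : M₁.Nonempty := ⟨_, mem_image_of_mem _ (mem_image_of_mem g₁ hymem)⟩
    have hM₂n : M₂.Nonempty := ⟨_, mem_image_of_mem _ (mem_image_of_mem f₂ hymem)⟩
    have hS₂n : S₂.Nonempty := ⟨_, mem_image_of_mem _ (mem_image_of_mem g₂ hzmem)⟩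
    have hS₁b : IsBounded S₁ := by
      rw [hS₁def, ← Set.image_comp]
      exact isBounded_image_ball (fun p hp q hq => by
        rw [Function.comp_apply, Function.comp_apply, hinl.dist_eq]; exact hf₁ p hp q hq)
    have hM₁b : IsBounded M₁ := by
      rw [hM₁def, ← Set.image_comp]
      exact isBounded_image_ball (l := 1) (fun p hp q hq => by
        rw [Function.comp_apply, Function.comp_apply, hinl.dist_eq, one_mul]
        exact hg₁ p hp q hq)
    have hM₂b : IsBounded M₂ := by
      rw [hM₂def, ← Set.image_comp]
      exact isBounded_image_ball (l := 1) (fun p hp q hq => by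
        rw [Function.comp_apply, Function.comp_apply, hinr.dist_eq, one_mul]
        exact hf₂ p hp q hq)
    have hS₂b : IsBounded S₂ := by
      rw [hS₂def, ← Set.image_comp]
      exact isBounded_image_ball (l := 1) (fun p hp q hq => by
        rw [Function.comp_apply, Function.comp_apply, hinr.dist_eq, one_mul]
        exact hg₂ p hp q hq)
    -- Hausdorff distance computations
    have e₁ : hausdorffDist S₁ M₁ = d₁ := by
      rw [hS₁def, hM₁def, Metric.hausdorffDist_image hinl]
    have e₂ : hausdorffDist M₂ S₂ = d₂ := by
      rw [hM₂def, hS₂def, Metric.hausdorffDist_image hinr]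
    have eM : hausdorffDist M₁ M₂ ≤ δ := by
      apply hausdorffDist_le_of_mem_dist hδ.le
      · rintro _ ⟨_, ⟨p, hp, rfl⟩, rfl⟩
        refine ⟨Sum.inr (f₂ p), mem_image_of_mem _ (mem_image_of_mem f₂ hp), ?_⟩
        have := glueDist_glued_points Φ Ψ δ ⟨p, hp⟩
        exact le_of_eq this
      · rintro _ ⟨_, ⟨p, hp, rfl⟩, rfl⟩
        refine ⟨Sum.inl (g₁ p), mem_image_of_mem _ (mem_image_of_mem g₁ hp), ?_⟩
        have := glueDist_glued_points Φ Ψ δ ⟨p, hp⟩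
        rw [dist_comm]
        exact le_of_eq this
    have fin₁ : EMetric.hausdorffEdist S₁ M₁ ≠ ⊤ :=
      Metric.hausdorffEdist_ne_top_of_nonempty_of_bounded hS₁n hM₁n hS₁b hM₁b
    have fin₂ : EMetric.hausdorffEdist M₁ M₂ ≠ ⊤ :=
      Metric.hausdorffEdist_ne_top_of_nonempty_of_bounded hM₁n hM₂n hM₁b hM₂b
    calc hausdorffDist S₁ S₂ ≤ hausdorffDist S₁ M₁ + hausdorffDist M₁ S₂ :=
          Metric.hausdorffDist_triangle fin₁
      _ ≤ hausdorffDist S₁ M₁ + (hausdorffDist M₁ M₂ + hausdorffDist M₂ S₂) := by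
          have := Metric.hausdorffDist_triangle (s := M₁) (t := M₂) (u := S₂) fin₂
          linarith
      _ = d₁ + (hausdorffDist M₁ M₂ + d₂) := by rw [e₁, e₂]
      _ ≤ d₁ + (δ + d₂) := by linarith
      _ < ε₁ + ε₂ := by rw [hδdef]; linarith

theorem pointed_image_ball {Y : Type a} {Y' : Type b} [MetricSpace Y] [MetricSpace Y']
    {f : Y → Y'} (hf : Isometry f) (hs : Function.Surjective f) {y : Y} {y' : Y'}
    (hy : f y = y') (R : ℝ) : f '' closedBall y R = closedBall y' R := by
  ext p
  constructor
  · rintro ⟨q, hq, rfl⟩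
    rw [mem_closedBall, ← hy, hf.dist_eq]
    exact hq
  · intro hp
    obtain ⟨q, rfl⟩ := hs p
    refine ⟨q, ?_, rfl⟩
    rw [mem_closedBall, ← hf.dist_eq q y, hy]
    exact hp

theorem pointedIsometric_symm {Y : Type a} {Y' : Type b} [MetricSpace Y] [MetricSpace Y']
    {y : Y} {y' : Y'} (h : PointedIsometric y y') : PointedIsometric y' y := by
  obtain ⟨f, hf, hs, hy⟩ := h
  have hbij : Function.Bijective f := ⟨hf.injective, hs⟩
  set e := Equiv.ofBijective f hbij with hedef
  refine ⟨e.symm, Isometry.of_dist_eq fun p q => ?_, e.symm.surjective, ?_⟩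
  · have : ∀ r, f (e.symm r) = r := fun r => e.apply_symm_apply r
    conv_rhs => rw [← this p, ← this q]
    rw [hf.dist_eq]
  · apply hf.injective
    have : f (e.symm y') = y' := e.apply_symm_apply y'
    rw [this, hy]

theorem properSpace_of_surjective_isometry {A : Type a} {B : Type b} [MetricSpace A]
    [MetricSpace B] [ProperSpace A] {f : A → B} (hf : Isometry f)
    (hs : Function.Surjective f) : ProperSpace B := by
  constructor
  intro p r
  obtain ⟨q, rfl⟩ := hs p
  rw [← pointed_image_ball hf hs rfl r]
  exact (isCompact_closedBall q r).image hf.continuous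

/-- transfer a tangent across a pointed isometry of the tangent space. -/
theorem tangent_transfer {X : Type u} [MetricSpace X] [ProperSpace X]
    {Y₁ : Type a} {Y₂ : Type b} [MetricSpace Y₁] [ProperSpace Y₁] [MetricSpace Y₂]
    [ProperSpace Y₂] {x : X} {y₁ : Y₁} {y₂ : Y₂} (hiso : PointedIsometric y₁ y₂)
    (h : IsTangentAt x Y₁ y₁) : IsTangentAt x Y₂ y₂ := by
  obtain ⟨ψ, hψ, hψs, hψy⟩ := pointedIsometric_symm hiso
  obtain ⟨lam, hpos, htop, hcl⟩ := h
  refine ⟨lam, hpos, htop, fun R hR ε hε => ?_⟩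
  filter_upwards [hcl R hR ε hε] with j hj
  obtain ⟨W, iW, f, g, hf, hg, hH⟩ := hj
  have haux : AuxClose.{max u a} (lam j) x y₂ R ε := by
    refine ⟨W, iW, f, fun p => g (ψ p), hf, ?_, ?_⟩
    · intro p hp q hq
      have hp' : ψ p ∈ closedBall y₁ R := by
        rw [mem_closedBall, ← hψy, hψ.dist_eq]; exact hp
      have hq' : ψ q ∈ closedBall y₁ R := by
        rw [mem_closedBall, ← hψy, hψ.dist_eq]; exact hq
      rw [hg (ψ p) hp' (ψ q) hq', hψ.dist_eq]
    · have : (fun p => g (ψ p)) '' closedBall y₂ R = g '' closedBall y₁ R := by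
        rw [show (fun p => g (ψ p)) = g ∘ ψ from rfl, Set.image_comp,
          pointed_image_ball hψ hψs hψy]
      rw [this]
      exact hH
  exact (haux.adjust (hpos j) hR : AuxClose.{max u b} (lam j) x y₂ R ε)

/-! ### scaled copies of a metric space -/

def Scaled (Y : Type a) (_m : ℝ) : Type a := Y

def Scaled.mk {Y : Type a} (m : ℝ) (p : Y) : Scaled Y m := p

def Scaled.un {Y : Type a} {m : ℝ} (p : Scaled Y m) : Y := p

def scaledMetric (Y : Type a) [MetricSpace Y] (m : ℝ) (hm : 0 < m) :
    MetricSpace (Scaled Y m) where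
  dist p q := m * dist (Scaled.un p) (Scaled.un q)
  dist_self p := by
    show m * dist (Scaled.un p) (Scaled.un p) = 0
    simp
  dist_comm p q := by
    show m * dist (Scaled.un p) (Scaled.un q) = m * dist (Scaled.un q) (Scaled.un p)
    rw [dist_comm]
  dist_triangle p q r := by
    show m * dist (Scaled.un p) (Scaled.un r) ≤
      m * dist (Scaled.un p) (Scaled.un q) + m * dist (Scaled.un q) (Scaled.un r)
    have h := dist_triangle (Scaled.un p) (Scaled.un q) (Scaled.un r)
    nlinarith
  eq_of_dist_eq_zero := by
    intro p q h
    have h2 : m * dist (Scaled.un p) (Scaled.un q) = 0 := h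
    have : dist (Scaled.un p) (Scaled.un q) = 0 := by
      rcases mul_eq_zero.1 h2 with h' | h'
      · exact absurd h' hm.ne'
      · exact h'
    show Scaled.un p = Scaled.un q
    exact eq_of_dist_eq_zero this

theorem scaled_dist_eq {Y : Type a} [MetricSpace Y] {m : ℝ} (hm : 0 < m) (p q : Scaled Y m) :
    letI := scaledMetric Y m hm
    dist p q = m * dist (Scaled.un p) (Scaled.un q) := rfl

theorem mem_scaled_closedBall {Y : Type a} [MetricSpace Y] {m : ℝ} (hm : 0 < m)
    {q p : Scaled Y m} {r : ℝ} :
    letI := scaledMetric Y m hm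
    (p ∈ closedBall q r ↔ Scaled.un p ∈ closedBall (Scaled.un q) (r / m)) := by
  letI := scaledMetric Y m hm
  rw [mem_closedBall, mem_closedBall, le_div_iff₀' hm]
  exact Iff.rfl

theorem scaledProper (Y : Type a) [MetricSpace Y] [ProperSpace Y] (m : ℝ) (hm : 0 < m) :
    letI := scaledMetric Y m hm
    ProperSpace (Scaled Y m) := by
  letI := scaledMetric Y m hm
  have hcont : Continuous (Scaled.mk m : Y → Scaled Y m) := by
    refine LipschitzWith.continuous (K := Real.toNNReal m) ?_
    apply LipschitzWith.of_dist_le_mul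
    intro p q
    rw [Real.coe_toNNReal m hm.le]
    exact le_of_eq (scaled_dist_eq hm _ _)
  constructor
  intro q r
  have : closedBall q r = (Scaled.mk m) '' closedBall (Scaled.un q) (r / m) := by
    ext p
    rw [mem_scaled_closedBall hm]
    constructor
    · intro hp
      exact ⟨Scaled.un p, hp, rfl⟩
    · rintro ⟨w, hw, rfl⟩
      exact hw
  rw [this]
  exact (isCompact_closedBall _ _).image hcont

theorem scaled_hausdorffDist_lt {W : Type a} [MetricSpace W] {m : ℝ} (hm : 0 < m)
    {s t : Set W} (hs : s.Nonempty) (ht : t.Nonempty) (hbs : IsBounded s)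
    (hbt : IsBounded t) {c : ℝ} (h : hausdorffDist s t < c) :
    letI := scaledMetric W m hm
    hausdorffDist ((Scaled.mk m) '' s) ((Scaled.mk m) '' t) < m * c := by
  letI := scaledMetric W m hm
  set r : ℝ := (hausdorffDist s t + c) / 2 with hrdef
  have hr0 : 0 ≤ r := by
    have := hausdorffDist_nonneg (s := s) (t := t)
    rw [hrdef]; linarith
  have hrlt : hausdorffDist s t < r := by rw [hrdef]; linarith
  have hrc : r < c := by rw [hrdef]; linarith
  have fin : EMetric.hausdorffEdist s t ≠ ⊤ :=
    Metric.hausdorffEdist_ne_top_of_nonempty_of_bounded hs ht hbs hbt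
  have : hausdorffDist ((Scaled.mk m) '' s) ((Scaled.mk m) '' t) ≤ m * r := by
    apply hausdorffDist_le_of_mem_dist (by positivity)
    · rintro _ ⟨p, hp, rfl⟩
      obtain ⟨q, hq, hd⟩ := exists_dist_lt_of_hausdorffDist_lt hp hrlt fin
      refine ⟨Scaled.mk m q, mem_image_of_mem _ hq, ?_⟩
      rw [scaled_dist_eq hm]
      have : Scaled.un (Scaled.mk m p) = p := rfl
      calc m * dist (Scaled.un (Scaled.mk m p)) (Scaled.un (Scaled.mk m q))
          = m * dist p q := rfl
        _ ≤ m * r := by nlinarith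
    · rintro _ ⟨p, hp, rfl⟩
      obtain ⟨q, hq, hd⟩ := exists_dist_lt_of_hausdorffDist_lt' hp hrlt fin
      refine ⟨Scaled.mk m q, mem_image_of_mem _ hq, ?_⟩
      rw [scaled_dist_eq hm]
      calc m * dist (Scaled.un (Scaled.mk m p)) (Scaled.un (Scaled.mk m q))
          = m * dist q p := by rw [dist_comm]; rfl
        _ ≤ m * r := by nlinarith
  calc hausdorffDist ((Scaled.mk m) '' s) ((Scaled.mk m) '' t) ≤ m * r := this
    _ < m * c := by nlinarith

theorem scale_tangent {X : Type a} {Y : Type b} [MetricSpace X] [MetricSpace Y]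
    {x : X} {y : Y} {m : ℝ} (hm : 0 < m) (h : IsTangentAt x Y y) :
    letI := scaledMetric Y m hm
    IsTangentAt x (Scaled Y m) (Scaled.mk m y) := by
  letI := scaledMetric Y m hm
  obtain ⟨lam, hpos, htop, hcl⟩ := h
  refine ⟨fun j => m * lam j, fun j => mul_pos hm (hpos j),
    Tendsto.const_mul_atTop hm htop, ?_⟩
  intro R hR ε hε
  filter_upwards [hcl (R / m) (by positivity) (ε / m) (by positivity)] with j hj
  obtain ⟨W, iW, f, g, hf, hg, hH⟩ := hj
  rw [div_div] at hf hH
  letI iW' : MetricSpace (Scaled W m) := scaledMetric W m hm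
  have hg1 : ∀ p ∈ closedBall y (R / m), ∀ q ∈ closedBall y (R / m),
      dist (g p) (g q) = (1:ℝ) * dist p q := by
    intro p hp q hq; rw [hg p hp q hq, one_mul]
  refine ⟨Scaled W m, iW', fun p => Scaled.mk m (f p),
    fun p => Scaled.mk m (g (Scaled.un p)), ?_, ?_, ?_⟩
  · intro p hp q hq
    have : dist (Scaled.mk m (f p)) (Scaled.mk m (f q)) = m * dist (f p) (f q) :=
      scaled_dist_eq hm _ _
    rw [this, hf p hp q hq]
    ring
  · intro p hp q hq
    have hp' : Scaled.un p ∈ closedBall y (R / m) := (mem_scaled_closedBall hm).1 hp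
    have hq' : Scaled.un q ∈ closedBall y (R / m) := (mem_scaled_closedBall hm).1 hq
    have e1 : dist (Scaled.mk m (g (Scaled.un p))) (Scaled.mk m (g (Scaled.un q)))
        = m * dist (g (Scaled.un p)) (g (Scaled.un q)) := scaled_dist_eq hm _ _
    have e2 : dist p q = m * dist (Scaled.un p) (Scaled.un q) := scaled_dist_eq hm _ _
    rw [e1, e2, hg _ hp' _ hq']
  · have hball : closedBall (Scaled.mk m y) R = Scaled.mk m '' closedBall y (R / m) := by
      ext p
      rw [mem_scaled_closedBall hm]
      constructor
      · intro hp
        exact ⟨Scaled.un p, hp, rfl⟩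
      · rintro ⟨w, hw, rfl⟩
        exact hw
    have him1 : (fun p => Scaled.mk m (f p)) '' closedBall x (R / (m * lam j))
        = Scaled.mk m '' (f '' closedBall x (R / (m * lam j))) := by
      rw [← Set.image_comp]; rfl
    have him2 : (fun p => Scaled.mk m (g (Scaled.un p))) '' closedBall (Scaled.mk m y) R
        = Scaled.mk m '' (g '' closedBall y (R / m)) := by
      rw [hball, ← Set.image_comp, ← Set.image_comp]; rfl
    rw [him1, him2]
    have hsn : (f '' closedBall x (R / (m * lam j))).Nonempty :=
      ⟨f x, mem_image_of_mem f (mem_closedBall_self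
        (by have := hpos j; positivity))⟩
    have htn : (g '' closedBall y (R / m)).Nonempty :=
      ⟨g y, mem_image_of_mem g (mem_closedBall_self (by positivity))⟩
    have hsb : IsBounded (f '' closedBall x (R / (m * lam j))) := isBounded_image_ball hf
    have htb : IsBounded (g '' closedBall y (R / m)) := isBounded_image_ball hg1
    have := scaled_hausdorffDist_lt hm hsn htn hsb htb hH
    have hme : m * (ε / m) = ε := by field_simp
    rw [hme] at this
    exact this

end TangentAux

open TangentAux in
/-- Pointwise version of the main theorem: at any point where tangents are unique up to
pointed isometry, every tangent of a tangent (at the base point) is pointed isometric to the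
tangent itself. -/
theorem TangentAux.aux_main {X : Type u} [MetricSpace X] [ProperSpace X] (x : X)
    (hx : ∀ (Y : Type v) [MetricSpace Y] [ProperSpace Y] (y : Y)
      (Y' : Type w) [MetricSpace Y'] [ProperSpace Y'] (y' : Y'),
      IsTangentAt x Y y → IsTangentAt x Y' y' → PointedIsometric y y') :
    ∀ (Y : Type v) [MetricSpace Y] [ProperSpace Y] (y : Y),
      IsTangentAt x Y y →
        ∀ (Z : Type w) [MetricSpace Z] [ProperSpace Z] (z : Z),
          IsTangentAt y Z z → PointedIsometric z y := by
  intro Y iY pY y hY Z iZ pZ z hZ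
  -- Step 1: `Y` admits a similarity of any positive ratio fixing `y`.
  have sim : ∀ m : ℝ, 0 < m → ∃ G : Y → Y, Function.Surjective G ∧ G y = y ∧
      ∀ p q : Y, dist (G p) (G q) = dist p q / m := by
    intro m hm
    letI iS : MetricSpace (Scaled Y m) := scaledMetric Y m hm
    haveI pS : ProperSpace (Scaled Y m) := scaledProper Y m hm
    set κ := kuratowskiEmbedding (Scaled Y m) with hκdef
    have hκ : Isometry κ := kuratowskiEmbedding.isometry _
    set T : Type w := ULift.{w} ↥(Set.range κ) with hTdef
    set e : Scaled Y m → T := fun p => ULift.up ⟨κ p, Set.mem_range_self p⟩ with hedef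
    have he : Isometry e := Isometry.of_dist_eq fun p q => by
      have h0 : dist (e p) (e q) = dist (κ p) (κ q) := rfl
      rw [h0, hκ.dist_eq]
    have hes : Function.Surjective e := by
      rintro ⟨⟨w', p, rfl⟩⟩
      exact ⟨p, rfl⟩
    haveI pT : ProperSpace T := properSpace_of_surjective_isometry he hes
    have hTan_S : IsTangentAt x (Scaled Y m) (Scaled.mk m y) := scale_tangent hm hY
    have hTan_T : IsTangentAt x T (e (Scaled.mk m y)) :=
      tangent_transfer ⟨e, he, hes, rfl⟩ hTan_S
    obtain ⟨F, hF, hFs, hFy⟩ := hx Y y T (e (Scaled.mk m y)) hY hTan_T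
    have hebij : Function.Bijective e := ⟨he.injective, hes⟩
    set E := Equiv.ofBijective e hebij with hEdef
    refine ⟨fun p => Scaled.un (E.symm (F p)), ?_, ?_, ?_⟩
    · intro q
      obtain ⟨p, hp⟩ := hFs (E (Scaled.mk m q))
      refine ⟨p, ?_⟩
      show (E.symm (F p)).un = q
      rw [hp, E.symm_apply_apply]
      rfl
    · show (E.symm (F y)).un = y
      rw [hFy]
      have h5 : E.symm (e (Scaled.mk m y)) = Scaled.mk m y :=
        E.symm_apply_apply (Scaled.mk m y)
      rw [h5]
      rfl
    · intro p q
      have h1 : dist (E.symm (F p)) (E.symm (F q)) = dist (F p) (F q) := by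
        conv_rhs => rw [← E.apply_symm_apply (F p), ← E.apply_symm_apply (F q)]
        exact (he.dist_eq _ _).symm
      have h2 : dist (E.symm (F p)) (E.symm (F q)) =
          m * dist (Scaled.un (E.symm (F p))) (Scaled.un (E.symm (F q))) :=
        scaled_dist_eq hm _ _
      have h3 : dist (F p) (F q) = dist p q := hF.dist_eq p q
      have h4 : m * dist (Scaled.un (E.symm (F p))) (Scaled.un (E.symm (F q)))
          = dist p q := by rw [← h2, h1, h3]
      rw [eq_div_iff hm.ne']
      linarith
  -- Step 2: balls of `Z` around `z` are GH-close to balls of `Y` around `y` at scale 1.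
  have key : ∀ R : ℝ, 0 < R → ∀ ε : ℝ, 0 < ε → BallsGHClose (1:ℝ) y z R ε := by
    intro R hR ε hε
    obtain ⟨mu, hmup, hmut, hmu⟩ := hZ
    obtain ⟨k, hk⟩ := (hmu R hR ε hε).exists
    obtain ⟨G, hGs, hGy, hGd⟩ := sim (mu k) (hmup k)
    obtain ⟨W, iW, f, g, hf, hg, hH⟩ := hk
    have hGmem : ∀ p ∈ closedBall y R, G p ∈ closedBall y (R / mu k) := by
      intro p hp
      rw [mem_closedBall]
      calc dist (G p) y = dist (G p) (G y) := by rw [hGy]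
        _ = dist p y / mu k := hGd p y
        _ ≤ R / mu k := div_le_div_of_nonneg_right hp (hmup k).le
    refine ⟨W, iW, fun p => f (G p), g, ?_, hg, ?_⟩
    · intro p hp q hq
      rw [div_one] at hp hq
      rw [one_mul, hf _ (hGmem p hp) _ (hGmem q hq), hGd, mul_comm,
        div_mul_cancel₀ _ (hmup k).ne']
    · rw [div_one]
      have hset : G '' closedBall y R = closedBall y (R / mu k) := by
        apply Set.Subset.antisymm
        · rintro _ ⟨p, hp, rfl⟩
          exact hGmem p hp
        · intro p hp
          obtain ⟨q, rfl⟩ := hGs p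
          refine ⟨q, ?_, rfl⟩
          rw [mem_closedBall]
          have h6 : dist (G q) y ≤ R / mu k := hp
          have h7 : dist (G q) (G y) = dist q y / mu k := hGd q y
          rw [hGy] at h7
          rw [h7] at h6
          have := hmup k
          calc dist q y = (dist q y / mu k) * mu k := by
                rw [div_mul_cancel₀ _ (hmup k).ne']
            _ ≤ (R / mu k) * mu k := by nlinarith
            _ = R := by rw [div_mul_cancel₀ _ (hmup k).ne']
      have him : (fun p => f (G p)) '' closedBall y R = f '' closedBall y (R / mu k) := by
        rw [show (fun p => f (G p)) = f ∘ G from rfl, Set.image_comp, hset]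
      rw [him]
      exact hH
  -- Step 3: `Z` is a tangent of `X` at `x`.
  have hZx : IsTangentAt x Z z := by
    obtain ⟨lam, hpos, htop, hcl⟩ := hY
    refine ⟨lam, hpos, htop, fun R hR ε hε => ?_⟩
    filter_upwards [hcl R hR (ε / 2) (by positivity)] with j hj
    have h2 : BallsGHClose (1:ℝ) y z R (ε / 2) := key R hR (ε / 2) (by positivity)
    have hcomp := AuxClose.comp (hpos j) hR
      ((ballsGHClose_iff_aux (l := lam j) (x := x) (y := y)).1 hj)
      ((ballsGHClose_iff_aux (l := (1:ℝ)) (x := y) (y := z)).1 h2)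
    have hfix : AuxClose.{max u w} (lam j) x z R (ε / 2 + ε / 2) :=
      hcomp.adjust (hpos j) hR
    rw [add_halves] at hfix
    exact (ballsGHClose_iff_aux).2 hfix
  exact pointedIsometric_symm (hx Y y Z z hY hZx)

/-- Let `(X, d)` be a proper geodesic metric space with a doubling measure
`μ`, and assume that for `μ`-a.e. `x` any two tangents of `X` at `x` are pointed isometric.
Then for `μ`-a.e. `x`, every proper tangent `(Y, y)` of `X` at `x` satisfies: every proper
tangent of `Y` at `y` is pointed isometric to `(Y, y)` itself. -/
theorem tangent_of_tangent_is_self {X : Type u} [MetricSpace X] [ProperSpace X]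
    [MeasurableSpace X] [BorelSpace X] (μ : Measure X)
    (hgeo : IsGeodesicSpace X) (hμ : IsDoublingMeasure μ)
    (huniq : ∀ᵐ x ∂μ, ∀ (Y : Type v) [MetricSpace Y] [ProperSpace Y] (y : Y)
      (Y' : Type w) [MetricSpace Y'] [ProperSpace Y'] (y' : Y'),
      IsTangentAt x Y y → IsTangentAt x Y' y' → PointedIsometric y y') :
    ∀ᵐ x ∂μ, ∀ (Y : Type v) [MetricSpace Y] [ProperSpace Y] (y : Y),
      IsTangentAt x Y y →
        ∀ (Z : Type w) [MetricSpace Z] [ProperSpace Z] (z : Z),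
          IsTangentAt y Z z → PointedIsometric z y := by
  filter_upwards [huniq] with x hx
  exact TangentAux.aux_main x hx
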